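/- Let k be a positive integer and N a positive integer. Then Σ_{0<n<N} 1/n^k = Σ_{0<n_1≤n_2≤···≤n_k<N} 1/((N−n_1)·n_2···n_k), where the right-hand sum is over weakly increasing k-tuples of integers in (0,N). -/

import Mathlib

open Finset

/-- `Sn b j a = Σ_{a ≤ n₁ ≤ … ≤ n_j < b} 1/(n₁⋯n_j)`. -/
def Sn (b : ℕ) : ℕ → ℕ → ℚ
  | 0, _ => 1
  | j+1, a => ∑ n ∈ Ico a b, (1/(n:ℚ)) * Sn b j n

/-- connector tail sum -/
def Tc (N m : ℕ) : ℕ → ℚ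
  | 0 => ((N-1).choose m : ℚ)
  | j+1 => ∑ n ∈ Ico m N, ((n.choose m : ℚ)/n) * Sn N j n

/-- weighted hockey stick -/
lemma hs (m : ℕ) (hm : 0 < m) : ∀ t : ℕ,
    ∑ n ∈ Ico m (t+1), (n.choose m : ℚ)/n = (t.choose m : ℚ)/m := by
  intro t
  induction t with
  | zero =>
    rw [show Ico m 1 = ∅ by simp [Finset.Ico_eq_empty_iff]; omega]
    simp [Nat.choose_eq_zero_of_lt hm]
  | succ t ih =>
    rcases le_or_gt m (t+1) with h | h
    · rw [Finset.sum_Ico_succ_top h, ih]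
      obtain ⟨m', rfl⟩ : ∃ m', m = m' + 1 := ⟨m-1, by omega⟩
      have key : (t+1) * t.choose m' = (t+1).choose (m'+1) * (m'+1) :=
        Nat.add_one_mul_choose_eq t m'
      have pas : (t+1).choose (m'+1) = t.choose m' + t.choose (m'+1) :=
        Nat.choose_succ_succ t m'
      have key' : ((t:ℚ)+1) * (t.choose m' : ℚ) = ((t+1).choose (m'+1) : ℚ) * ((m':ℚ)+1) := by
        exact_mod_cast key
      have pas' : ((t+1).choose (m'+1) : ℚ) = (t.choose m' : ℚ) + (t.choose (m'+1) : ℚ) := by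
        exact_mod_cast pas
      have hm0 : ((m':ℚ)+1) ≠ 0 := by positivity
      have ht0 : ((t:ℚ)+1) ≠ 0 := by positivity
      push_cast
      have step : ((t+1).choose (m'+1) : ℚ)/((t:ℚ)+1) = (t.choose m' : ℚ)/((m':ℚ)+1) := by
        rw [div_eq_div_iff ht0 hm0]; linear_combination -key'
      linear_combination step - (1/((m':ℚ)+1)) * pas'
    · rw [show Ico m (t+1+1) = ∅ by simp [Finset.Ico_eq_empty_iff]; omega]
      simp [Nat.choose_eq_zero_of_lt h]

lemma transport (N m : ℕ) (hm : 0 < m) (hmN : m < N) (j : ℕ) :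
    (1/(m:ℚ)) * Tc N m j = Tc N m (j+1) := by
  induction j with
  | zero =>
    show (1/(m:ℚ)) * ((N-1).choose m : ℚ) = ∑ n ∈ Ico m N, ((n.choose m : ℚ)/n) * Sn N 0 n
    have hN : N - 1 + 1 = N := by omega
    rw [show (∑ n ∈ Ico m N, ((n.choose m : ℚ)/n) * Sn N 0 n)
        = ∑ n ∈ Ico m (N-1+1), (n.choose m : ℚ)/n by
      rw [hN]; exact Finset.sum_congr rfl fun n _ => by simp [Sn]]
    rw [hs m hm (N-1)]
    ring
  | succ j _ =>
    show (1/(m:ℚ)) * (∑ n ∈ Ico m N, ((n.choose m : ℚ)/n) * Sn N j n)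
        = ∑ n ∈ Ico m N, ((n.choose m : ℚ)/n) * Sn N (j+1) n
    rw [Finset.mul_sum]
    have L : ∀ n ∈ Ico m N, (1/(m:ℚ)) * (((n.choose m : ℚ)/n) * Sn N j n)
        = ∑ p ∈ Ico m (n+1), ((p.choose m : ℚ)/p) * ((1/(n:ℚ)) * Sn N j n) := by
      intro n _
      rw [← Finset.sum_mul, hs m hm n]
      ring
    rw [Finset.sum_congr rfl L, ← Finset.sum_Ico_Ico_comm m N
      (fun p n => ((p.choose m : ℚ)/p) * ((1/(n:ℚ)) * Sn N j n))]
    exact Finset.sum_congr rfl fun p _ => by rw [← Finset.mul_sum]; rfl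

lemma ratio_sum (M s : ℕ) (h : s ≤ M) :
    ∑ m ∈ range (s+1), (s.choose m : ℚ)/(M.choose m) = ((M:ℚ)+1)/((M:ℚ)+1-s) := by
  have hMs : (0:ℚ) < (M:ℚ)+1-s := by
    have : (s:ℚ) ≤ M := by exact_mod_cast h
    linarith
  have hCs : (0:ℚ) < (M.choose s : ℚ) := by exact_mod_cast Nat.choose_pos h
  -- step 1: termwise rewrite
  have t1 : ∀ m ∈ range (s+1), (s.choose m : ℚ)/(M.choose m)
      = ((M-m).choose (M-s) : ℚ)/(M.choose s) := by
    intro m hm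
    rw [Finset.mem_range] at hm
    have hms : m ≤ s := by omega
    have hCm : (0:ℚ) < (M.choose m : ℚ) := by
      exact_mod_cast Nat.choose_pos (hms.trans h)
    have key : M.choose s * s.choose m = M.choose m * (M-m).choose (M-s) := by
      rw [Nat.choose_mul (n := M) hms]
      congr 1
      rw [← Nat.choose_symm (by omega : s - m ≤ M - m)]
      congr 1
      omega
    have key' : (M.choose s : ℚ) * (s.choose m : ℚ)
        = (M.choose m : ℚ) * ((M-m).choose (M-s) : ℚ) := by exact_mod_cast key
    rw [div_eq_div_iff (ne_of_gt hCm) (ne_of_gt hCs)]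
    linear_combination key'
  rw [Finset.sum_congr rfl t1, ← Finset.sum_div]
  -- step 2: reindex and hockey stick
  have t2 : ∑ m ∈ range (s+1), ((M-m).choose (M-s) : ℚ)
      = ((M+1).choose (M-s+1) : ℚ) := by
    rw [← Nat.cast_sum, ← Nat.sum_Icc_choose M (M-s)]
    congr 1
    apply Finset.sum_nbij' (fun m => M - m) (fun r => M - r)
    · intro m hm; rw [Finset.mem_range] at hm; rw [Finset.mem_Icc]; omega
    · intro r hr; rw [Finset.mem_Icc] at hr; rw [Finset.mem_range]; omega
    · intro m hm; rw [Finset.mem_range] at hm; omega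
    · intro r hr; rw [Finset.mem_Icc] at hr; omega
    · intro m hm; rfl
  rw [t2]
  -- step 3
  have sym : (M+1).choose (M-s+1) = (M+1).choose s := by
    rw [← Nat.choose_symm (by omega : s ≤ M+1)]
    congr 1
    omega
  have key : M.choose s * (M + 1) = (M+1).choose s * (M + 1 - s) := Nat.choose_mul_succ_eq M s
  have key' : (M.choose s : ℚ) * ((M:ℚ) + 1) = ((M+1).choose s : ℚ) * ((M:ℚ) + 1 - s) := by
    have hc : ((M + 1 - s : ℕ) : ℚ) = (M:ℚ) + 1 - s := by
      push_cast [Nat.cast_sub (by omega : s ≤ M + 1)]; ring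
    rw [← hc]; exact_mod_cast key
  rw [sym, div_eq_div_iff (ne_of_gt hCs) (ne_of_gt hMs)]
  linear_combination -key'

lemma lem2 (M t : ℕ) (h : t + 1 ≤ M) :
    ∑ m ∈ Ico 1 (t+2), (t.choose (m-1) : ℚ)/(m * M.choose m) = 1/((M:ℚ)-t) := by
  have hMt : (0:ℚ) < (M:ℚ) - t := by
    have : ((t:ℚ)+1) ≤ M := by exact_mod_cast h
    linarith
  have t1 : ∀ m ∈ Ico 1 (t+2), (t.choose (m-1) : ℚ)/(m * M.choose m)
      = (1/((t:ℚ)+1)) * (((t+1).choose m : ℚ)/(M.choose m)) := by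
    intro m hm
    rw [Finset.mem_Ico] at hm
    obtain ⟨m', rfl⟩ : ∃ m', m = m' + 1 := ⟨m-1, by omega⟩
    have key : (t+1) * t.choose m' = (t+1).choose (m'+1) * (m'+1) := Nat.add_one_mul_choose_eq t m'
    have key' : ((t:ℚ)+1) * (t.choose m' : ℚ) = ((t+1).choose (m'+1) : ℚ) * ((m':ℚ)+1) := by
      exact_mod_cast key
    have hC : (0:ℚ) < (M.choose (m'+1) : ℚ) := by
      exact_mod_cast Nat.choose_pos (by omega : m' + 1 ≤ M)
    have h1 : ((m':ℚ)+1) ≠ 0 := by positivity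
    have h2 : ((t:ℚ)+1) ≠ 0 := by positivity
    have h3 : (M.choose (m'+1) : ℚ) ≠ 0 := ne_of_gt hC
    simp only [Nat.add_sub_cancel]
    rw [div_mul_div_comm, one_mul, div_eq_div_iff (by positivity) (by positivity)]
    push_cast
    linear_combination (M.choose (m'+1) : ℚ) * key'
  rw [Finset.sum_congr rfl t1, ← Finset.mul_sum]
  have t2 : ∑ m ∈ Ico 1 (t+2), ((t+1).choose m : ℚ)/(M.choose m)
      = ((M:ℚ)+1)/((M:ℚ)-t) - 1 := by
    have hr := ratio_sum M (t+1) h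
    rw [Finset.range_eq_Ico, Finset.sum_eq_sum_Ico_succ_bot (by omega : 0 < t+2)] at hr
    simp only [Nat.choose_zero_right, Nat.cast_one] at hr
    push_cast at hr
    have : ((M:ℚ)+1-(t+1):ℚ) = (M:ℚ)-t := by ring
    rw [this] at hr
    have : (1:ℚ)/1 = 1 := by norm_num
    linarith [hr]
  rw [t2]
  have h2 : ((t:ℚ)+1) ≠ 0 := by positivity
  have h3 : (M:ℚ)-(t:ℚ) ≠ 0 := ne_of_gt hMt
  field_simp
  ring

lemma bdry (N : ℕ) : ∀ t : ℕ, t < N →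
    ∑ m ∈ Ico 1 (t+1), (t.choose m : ℚ)/(m * (N-1).choose m)
      = ∑ n ∈ Ico 1 (t+1), 1/((N:ℚ)-n) := by
  intro t
  induction t with
  | zero => simp
  | succ t ih =>
    intro ht
    have ih' := ih (by omega)
    -- split Pascal
    have t1 : ∀ m ∈ Ico 1 (t+2), ((t+1).choose m : ℚ)/(m * (N-1).choose m)
        = (t.choose m : ℚ)/(m * (N-1).choose m)
          + (t.choose (m-1) : ℚ)/(m * (N-1).choose m) := by
      intro m hm
      rw [Finset.mem_Ico] at hm
      obtain ⟨m', rfl⟩ : ∃ m', m = m' + 1 := ⟨m-1, by omega⟩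
      have : (t+1).choose (m'+1) = t.choose m' + t.choose (m'+1) := Nat.choose_succ_succ t m'
      rw [this]
      push_cast
      ring
    rw [Finset.sum_congr rfl t1, Finset.sum_add_distrib]
    have t2 : ∑ m ∈ Ico 1 (t+2), (t.choose m : ℚ)/(m * (N-1).choose m)
        = ∑ m ∈ Ico 1 (t+1), (t.choose m : ℚ)/(m * (N-1).choose m) := by
      rw [Finset.sum_Ico_succ_top (by omega : 1 ≤ t+1)]
      simp [Nat.choose_eq_zero_of_lt (by omega : t < t+1)]
    have t3 : ∑ m ∈ Ico 1 (t+2), (t.choose (m-1) : ℚ)/(m * (N-1).choose m)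
        = 1/(((N-1 : ℕ):ℚ)-t) := lem2 (N-1) t (by omega)
    rw [t2, t3, ih']
    rw [Finset.sum_Ico_succ_top (by omega : 1 ≤ t+1)]
    congr 1
    have : ((N-1 : ℕ):ℚ) = (N:ℚ)-1 := by
      push_cast [Nat.cast_sub (by omega : 1 ≤ N)]; ring
    rw [this]
    push_cast
    ring_nf

lemma chain (N : ℕ) : ∀ i j : ℕ,
    ∑ m ∈ Ico 1 N, (1/(m:ℚ)^(i+1)) * Tc N m j / ((N-1).choose m : ℚ)
      = ∑ m ∈ Ico 1 N, (1/(m:ℚ)) * Tc N m (j+i) / ((N-1).choose m : ℚ) := by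
  intro i
  induction i with
  | zero => intro j; simp
  | succ i ih =>
    intro j
    have step : ∀ m ∈ Ico 1 N, (1/(m:ℚ)^(i+1+1)) * Tc N m j / ((N-1).choose m : ℚ)
        = (1/(m:ℚ)^(i+1)) * Tc N m (j+1) / ((N-1).choose m : ℚ) := by
      intro m hm
      rw [Finset.mem_Ico] at hm
      rw [← transport N m (by omega) (by omega) j]
      rw [pow_succ]
      ring
    rw [Finset.sum_congr rfl step, ih (j+1)]
    have e : j+1+i = j+(i+1) := by omega
    rw [e]

lemma reflect (N : ℕ) (g : ℕ → ℚ) :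
    ∑ m ∈ Ico 1 N, g m = ∑ n ∈ Ico 1 N, g (N - n) := by
  apply Finset.sum_nbij' (fun m => N - m) (fun n => N - n)
  · intro m hm; rw [Finset.mem_Ico] at *; omega
  · intro n hn; rw [Finset.mem_Ico] at *; omega
  · intro m hm; rw [Finset.mem_Ico] at hm; omega
  · intro n hn; rw [Finset.mem_Ico] at hn; omega
  · intro m hm; rw [Finset.mem_Ico] at hm; congr 1; omega

lemma endpoint (N : ℕ) (hN : 0 < N) : ∀ k' : ℕ,
    ∑ m ∈ Ico 1 N, (1/(m:ℚ)) * Tc N m k' / ((N-1).choose m : ℚ)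
      = ∑ n ∈ Ico 1 N, (1/((N:ℚ)-n)) * Sn N k' n := by
  have cast_sub : ∀ n ∈ Ico 1 N, ((N - n : ℕ) : ℚ) = (N:ℚ) - n := by
    intro n hn; rw [Finset.mem_Ico] at hn
    push_cast [Nat.cast_sub (by omega : n ≤ N)]; ring
  intro k'
  match k' with
  | 0 =>
    have t1 : ∀ m ∈ Ico 1 N, (1/(m:ℚ)) * Tc N m 0 / ((N-1).choose m : ℚ) = 1/(m:ℚ) := by
      intro m hm
      rw [Finset.mem_Ico] at hm
      have this : ((N-1).choose m : ℚ) ≠ 0 :=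
        Nat.cast_ne_zero.mpr (Nat.choose_pos (by omega : m ≤ N - 1)).ne'
      show (1/(m:ℚ)) * ((N-1).choose m : ℚ) / ((N-1).choose m : ℚ) = 1/(m:ℚ)
      rw [mul_div_assoc, div_self this, mul_one]
    rw [Finset.sum_congr rfl t1, reflect N (fun m => 1/(m:ℚ))]
    apply Finset.sum_congr rfl
    intro n hn
    show 1/((N - n : ℕ):ℚ) = _
    rw [cast_sub n hn]
    simp [Sn]
  | j+1 =>
    -- LHS: unfold Tc, swap
    have t1 : ∀ m ∈ Ico 1 N, (1/(m:ℚ)) * Tc N m (j+1) / ((N-1).choose m : ℚ)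
        = ∑ n ∈ Ico m N, ((n.choose m : ℚ)/(m * (N-1).choose m)) * ((1/(n:ℚ)) * Sn N j n) := by
      intro m hm
      show (1/(m:ℚ)) * (∑ n ∈ Ico m N, ((n.choose m : ℚ)/n) * Sn N j n) / ((N-1).choose m : ℚ) = _
      rw [Finset.mul_sum, Finset.sum_div]
      apply Finset.sum_congr rfl
      intro n _
      ring
    rw [Finset.sum_congr rfl t1,
      Finset.sum_Ico_Ico_comm 1 N (fun m n => ((n.choose m : ℚ)/(m * (N-1).choose m)) * ((1/(n:ℚ)) * Sn N j n))]
    -- RHS: unfold Sn, swap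
    have t2 : ∀ p ∈ Ico 1 N, (1/((N:ℚ)-p)) * Sn N (j+1) p
        = ∑ n ∈ Ico p N, (1/((N:ℚ)-p)) * ((1/(n:ℚ)) * Sn N j n) := by
      intro p _
      show (1/((N:ℚ)-p)) * (∑ n ∈ Ico p N, (1/(n:ℚ)) * Sn N j n) = _
      rw [Finset.mul_sum]
    rw [Finset.sum_congr rfl t2,
      Finset.sum_Ico_Ico_comm 1 N (fun p n => (1/((N:ℚ)-p)) * ((1/(n:ℚ)) * Sn N j n))]
    apply Finset.sum_congr rfl
    intro n hn
    rw [← Finset.sum_mul, ← Finset.sum_mul]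
    congr 1
    rw [Finset.mem_Ico] at hn
    exact bdry N n (by omega)

lemma cons_bij (j a b : ℕ) (F : ℕ → (Fin j → ℕ) → ℚ) :
    ∑ f ∈ (Fintype.piFinset fun _ : Fin (j+1) => Ico a b).filter Monotone,
      F (f 0) (fun i => f i.succ)
    = ∑ n ∈ Ico a b,
        ∑ g ∈ (Fintype.piFinset fun _ : Fin j => Ico n b).filter Monotone, F n g := by
  rw [Finset.sum_sigma']
  apply Finset.sum_nbij' (fun f => (⟨f 0, fun i => f i.succ⟩ : Σ _ : ℕ, (Fin j → ℕ)))
      (fun p => Fin.cons p.1 p.2)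
  · intro f hf
    rw [Finset.mem_filter, Fintype.mem_piFinset] at hf
    obtain ⟨hmem, hmono⟩ := hf
    rw [Finset.mem_sigma]
    refine ⟨hmem 0, ?_⟩
    rw [Finset.mem_filter, Fintype.mem_piFinset]
    constructor
    · intro i
      rw [Finset.mem_Ico]
      have h1 := (Finset.mem_Ico.mp (hmem 0)).1
      have h2 := Finset.mem_Ico.mp (hmem i.succ)
      exact ⟨hmono (Fin.zero_le i.succ), h2.2⟩
    · exact hmono.comp (Fin.strictMono_succ).monotone
  · intro p hp
    rw [Finset.mem_sigma, Finset.mem_filter, Fintype.mem_piFinset] at hp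
    obtain ⟨hn, hg, hgm⟩ := hp
    rw [Finset.mem_filter, Fintype.mem_piFinset]
    constructor
    · intro i
      induction i using Fin.cases with
      | zero => simpa using hn
      | succ i =>
        simp only [Fin.cons_succ]
        have h1 := Finset.mem_Ico.mp (hg i)
        have h2 := Finset.mem_Ico.mp hn
        rw [Finset.mem_Ico]
        omega
    · intro x y hxy
      induction x using Fin.cases with
      | zero =>
        induction y using Fin.cases with
        | zero => exact le_refl _
        | succ y =>
          simp only [Fin.cons_zero, Fin.cons_succ]
          exact (Finset.mem_Ico.mp (hg y)).1
      | succ x =>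
        induction y using Fin.cases with
        | zero =>
          exact absurd hxy (by simp [Fin.le_def])
        | succ y =>
          simp only [Fin.cons_succ]
          exact hgm (by rwa [Fin.succ_le_succ_iff] at hxy)
  · intro f _
    exact Fin.cons_self_tail f
  · intro p _
    ext
    · simp
    · simp [Fin.cons_succ]
  · intro f _
    rfl

lemma pi_to_Sn (b : ℕ) : ∀ j a : ℕ,
    ∑ f ∈ (Fintype.piFinset fun _ : Fin j => Ico a b).filter Monotone,
      ∏ i, (1:ℚ)/(f i) = Sn b j a := by
  intro j
  induction j with
  | zero =>
    intro a
    have hmono : ∀ f ∈ (Fintype.piFinset fun _ : Fin 0 => Ico a b), Monotone f := by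
      intro f _ x
      exact x.elim0
    rw [Finset.filter_true_of_mem hmono]
    simp [Sn]
  | succ j ih =>
    intro a
    have t1 : ∀ f ∈ (Fintype.piFinset fun _ : Fin (j+1) => Ico a b).filter Monotone,
        ∏ i, (1:ℚ)/(f i) = (fun (n : ℕ) (g : Fin j → ℕ) => (1/(n:ℚ)) * ∏ i, (1:ℚ)/(g i)) (f 0) (fun i => f i.succ) := by
      intro f _
      exact Fin.prod_univ_succ _
    rw [Finset.sum_congr rfl t1,
      cons_bij j a b (fun n g => (1/(n:ℚ)) * ∏ i, (1:ℚ)/(g i))]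
    rw [Sn]
    apply Finset.sum_congr rfl
    intro n _
    rw [← ih n, Finset.mul_sum]


lemma analytic (N : ℕ) (hN : 0 < N) (k' : ℕ) :
    ∑ n ∈ Ico 1 N, (1:ℚ)/(n:ℚ)^(k'+1) = ∑ n ∈ Ico 1 N, (1/((N:ℚ)-n)) * Sn N k' n := by
  have start : ∀ n ∈ Ico 1 N, (1:ℚ)/(n:ℚ)^(k'+1)
      = (1/(n:ℚ)^(k'+1)) * Tc N n 0 / (((N-1).choose n : ℕ) : ℚ) := by
    intro n hn
    rw [Finset.mem_Ico] at hn
    have hC : (((N-1).choose n : ℕ) : ℚ) ≠ 0 :=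
      Nat.cast_ne_zero.mpr (Nat.choose_pos (by omega : n ≤ N - 1)).ne'
    show _ = (1/(n:ℚ)^(k'+1)) * (((N-1).choose n : ℕ) : ℚ) / (((N-1).choose n : ℕ) : ℚ)
    rw [mul_div_assoc, div_self hC, mul_one]
  rw [Finset.sum_congr rfl start, chain N k' 0]
  rw [show 0 + k' = k' from Nat.zero_add k']
  exact endpoint N hN k'

/-- Depth-1 discretization: `Σ_{0<n<N} 1/n^k = Σ_{0<n₁≤⋯≤n_k<N} 1/((N−n₁)·n₂⋯n_k)`. -/
theorem stmt_10 (N k : ℕ) (hN : 0 < N) (hk : 0 < k) :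
    ∑ n ∈ Finset.Ioo 0 N, (1 : ℚ) / (n : ℚ) ^ k =
    ∑ f ∈ (Fintype.piFinset fun _ : Fin k => Finset.Ioo 0 N).filter Monotone,
      (1 / ((N : ℚ) - (f ⟨0, hk⟩ : ℚ))) *
        ∏ i ∈ Finset.univ.erase (⟨0, hk⟩ : Fin k), (1 : ℚ) / (f i : ℚ) := by
  obtain ⟨k', rfl⟩ : ∃ k', k = k' + 1 := ⟨k - 1, by omega⟩
  have eIoo : Finset.Ioo 0 N = Finset.Ico 1 N := by
    ext x; simp only [Finset.mem_Ioo, Finset.mem_Ico]; omega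
  have e0 : (⟨0, hk⟩ : Fin (k'+1)) = 0 := by
    ext
    simp
  have eprod : ∀ f : Fin (k'+1) → ℕ,
      ∏ i ∈ Finset.univ.erase (0 : Fin (k'+1)), (1:ℚ)/(f i)
        = ∏ i : Fin k', (1:ℚ)/(f i.succ) := by
    intro f
    rw [Fin.univ_succ, Finset.erase_cons, Finset.prod_map]
    rfl
  rw [eIoo, e0]
  have t1 : ∀ f ∈ (Fintype.piFinset fun _ : Fin (k'+1) => Ico 1 N).filter Monotone,
      (1 / ((N : ℚ) - (f 0 : ℚ))) * ∏ i ∈ Finset.univ.erase (0 : Fin (k'+1)), (1:ℚ)/(f i)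
      = (fun (n : ℕ) (g : Fin k' → ℕ) => (1/((N:ℚ) - n)) * ∏ i, (1:ℚ)/(g i)) (f 0)
          (fun i => f i.succ) := by
    intro f _
    rw [eprod f]
  rw [Finset.sum_congr rfl t1,
    cons_bij k' 1 N (fun n g => (1/((N:ℚ) - n)) * ∏ i, (1:ℚ)/(g i)),
    analytic N hN k']
  apply Finset.sum_congr rfl
  intro n _
  rw [← pi_to_Sn N k' n, Finset.mul_sum]
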